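/- Let G be a hypomatchable graph, let v be a vertex of G, and let M be a perfect matching of G−v. Then for each vertex w of G, G contains a path Q of odd order connecting v and w that is an alternating path with respect to (v,M), such that M − E(Q) is a perfect matching of G − V(Q). -/

import Mathlib

open SimpleGraph

/-- `G.IsPerfectMatchingOn M s`: `M` is a set of edges of `G` forming a perfect matching of
the induced subgraph of `G` on `s`. -/
def SimpleGraph.IsPerfectMatchingOn {V : Type*} (G : SimpleGraph V)
    (M : Set (Sym2 V)) (s : Set V) : Prop :=
  M ⊆ G.edgeSet ∧ (∀ e ∈ M, ∀ v ∈ e, v ∈ s) ∧ (∀ v ∈ s, ∃! e, e ∈ M ∧ v ∈ e)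

/-- `G` is hypomatchable if `G − x` has a perfect matching for every vertex `x`. -/
def SimpleGraph.Hypomatchable {V : Type*} (G : SimpleGraph V) : Prop :=
  ∀ x : V, ∃ M : Set (Sym2 V), G.IsPerfectMatchingOn M {x}ᶜ

section Aux

variable {V : Type*} {G : SimpleGraph V}

lemma supp_zero {a b : V} (p : G.Walk a b) (h : 0 < p.support.length) :
    p.support[0] = a := by
  cases p <;> simp

lemma supp_len {a b : V} (p : G.Walk a b) (h : p.length < p.support.length) :
    p.support[p.length] = b := by
  induction p with
  | nil => simp
  | cons h q ih => simpa using ih (by simp [Walk.length_support])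

lemma edge_getElem {a b : V} (p : G.Walk a b) (j : ℕ) (hj : j < p.edges.length) :
    p.edges[j] = s(p.support[j]'(by rw [p.length_support]; rw [p.length_edges] at hj; omega),
      p.support[j+1]'(by rw [p.length_support]; rw [p.length_edges] at hj; omega)) := by
  induction p generalizing j with
  | nil => simp at hj
  | cons h q ih =>
    cases j with
    | zero => simp [supp_zero]
    | succ j => simpa using ih j (by simpa using hj)

lemma isPath_concat {a b c : V} {p : G.Walk a b} (hp : p.IsPath) (h : G.Adj b c)
    (hc : c ∉ p.support) : (p.concat h).IsPath := by
  rw [Walk.isPath_def, Walk.support_concat, List.nodup_append]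
  exact ⟨hp.support_nodup, by simp, by simpa using fun (x : V) (hx : x ∈ p.support) (hxc : x = c) => hc (hxc ▸ hx)⟩

variable {v w : V} {M M' : Set (Sym2 V)}

/-- no interior/start vertex equals `w` -/
lemma not_w (hM' : G.IsPerfectMatchingOn M' {w}ᶜ) {u : V} (p : G.Walk v u)
    (huw : u ≠ w)
    (hD : ∀ j (h : j < p.edges.length), Even j → p.edges[j] ∈ M')
    (i : ℕ) (hi : i < p.support.length) : p.support[i] ≠ w := by
  have hls := p.length_support
  have hle := p.length_edges
  have hi' : i ≤ p.length := by omega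
  rcases eq_or_lt_of_le hi' with h | h
  · subst h; rw [supp_len]; exact huw
  rcases Nat.even_or_odd i with he | ho
  · -- use edge i
    have h1 : i < p.edges.length := by omega
    have := hM'.2.1 _ (hD i h1 he) (p.support[i]) (by rw [edge_getElem p i h1]; simp)
    simpa using this
  · -- i odd, use edge i-1
    have h1 : i - 1 < p.edges.length := by omega
    have hio : 1 ≤ i := ho.pos
    have hkey : p.support[i-1+1]'(by omega) ∈ p.edges[i-1] := by
      rw [edge_getElem p (i-1) h1]; simp
    have heq : p.support[i]'(by omega) = p.support[i-1+1]'(by omega) := by congr 1; omega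
    have := hM'.2.1 _ (hD (i-1) h1 (by obtain ⟨k,hk⟩ := ho; exact ⟨k, by omega⟩))
      (p.support[i]) (heq ▸ hkey)
    simpa using this

lemma ext1 (hM' : G.IsPerfectMatchingOn M' {w}ᶜ) (hvw : v ≠ w) {u : V} (p : G.Walk v u)
    (hp : p.IsPath) (hev : Even p.length)
    (hD : ∀ j (h : j < p.edges.length), Even j → p.edges[j] ∈ M')
    (huw : u ≠ w) :
    ∃ (u' : V) (hadj : G.Adj u u'), u' ∉ p.support ∧ s(u, u') ∈ M' ∧ u' ≠ w := by
  have hls := p.length_support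
  have hle := p.length_edges
  obtain ⟨e, ⟨heM, hue⟩, _⟩ := hM'.2.2 u (by simpa using huw)
  set u' := Sym2.Mem.other hue with hu'
  have hspec : s(u, u') = e := Sym2.other_spec hue
  have hadj : G.Adj u u' := by rw [← SimpleGraph.mem_edgeSet, hspec]; exact hM'.1 heM
  have hu'w : u' ≠ w := by simpa using hM'.2.1 e heM u' (Sym2.other_mem hue)
  have hu'e : u' ∈ e := Sym2.other_mem hue
  have hnd := hp.support_nodup
  have hulen : p.support[p.length]'(by omega) = u := supp_len p (by omega)
  refine ⟨u', hadj, ?_, hspec ▸ heM, hu'w⟩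
  intro hmem
  obtain ⟨i, hi, hqi⟩ := List.mem_iff_getElem.mp hmem
  have hidx : ∀ k (hk : k < p.support.length), p.support[k] = u → k = p.length := by
    intro k hk hku
    exact (List.Nodup.getElem_inj_iff hnd).mp (by rw [hku, hulen])
  rcases Nat.eq_zero_or_pos i with rfl | hpos
  · -- u' = v
    have hqv : u' = v := by rw [← hqi, supp_zero]
    rcases Nat.eq_zero_or_pos p.length with hl0 | hl1
    · exact hadj.ne' (hqv.trans (Walk.eq_of_length_eq_zero hl0))
    · have h0 : (0:ℕ) < p.edges.length := by omega
      have he0 : p.edges[0] ∈ M' := hD 0 h0 Even.zero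
      have hv0 : p.support[0]'(by omega) ∈ p.edges[0] := by
        rw [edge_getElem p 0 h0]; simp
      obtain ⟨f, _, hfu⟩ := hM'.2.2 v (by simpa using hvw)
      have h1 : e = f := hfu e ⟨heM, hqv ▸ hu'e⟩
      have h2 : p.edges[0] = f := hfu _ ⟨he0, by rwa [supp_zero] at hv0⟩
      have hue2 : u ∈ p.edges[0] := by rw [h2, ← h1]; exact hue
      rw [edge_getElem p 0 h0, Sym2.mem_iff] at hue2
      rcases hue2 with h3 | h3
      · have := hidx 0 (by omega) h3.symm; omega
      · have := hidx 1 (by omega) h3.symm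
        rcases hev with ⟨k, hk⟩; omega
  · -- i ≥ 1
    have hqw : p.support[i] ≠ w := not_w hM' p huw hD i hi
    obtain ⟨f, _, hfu⟩ := hM'.2.2 (p.support[i]) (by simpa using hqw)
    have h1 : e = f := hfu e ⟨heM, hqi ▸ hu'e⟩
    rcases Nat.even_or_odd i with hie | hio
    · -- i even : i < len, edge i ∈ M'
      have hilen : i < p.length := by
        rcases eq_or_lt_of_le (show i ≤ p.length by omega) with heq | h
        · exfalso
          have hsu : p.support[i] = u := by subst heq; exact hulen
          exact hadj.ne' (hqi ▸ hsu)
        · exact h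
      have h2 : p.edges[i]'(by omega) = f := by
        refine hfu _ ⟨hD i (by omega) hie, ?_⟩
        rw [edge_getElem p i (by omega)]; simp
      have hue2 : u ∈ p.edges[i]'(by omega) := by rw [h2, ← h1]; exact hue
      rw [edge_getElem p i (by omega), Sym2.mem_iff] at hue2
      rcases hue2 with h3 | h3
      · have := hidx i hi h3.symm; omega
      · have := hidx (i+1) (by omega) h3.symm
        rcases hev with ⟨k, hk⟩; rcases hie with ⟨m, hm⟩; omega
    · -- i odd : i < len, edge (i-1) ∈ M'
      have hilen : i < p.length := by
        rcases eq_or_lt_of_le (show i ≤ p.length by omega) with h | h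
        · rcases hev with ⟨k, hk⟩; rcases hio with ⟨m, hm⟩; omega
        · exact h
      have hi1 : i - 1 < p.edges.length := by omega
      have hkey : p.support[i-1+1]'(by omega) ∈ p.edges[i-1] := by
        rw [edge_getElem p (i-1) hi1]; simp
      have heqi : p.support[i]'(by omega) = p.support[i-1+1]'(by omega) := by congr 1; omega
      have h2 : p.edges[i-1] = f := by
        refine hfu _ ⟨hD (i-1) hi1 (by obtain ⟨k,hk⟩ := hio; exact ⟨k, by omega⟩), heqi ▸ hkey⟩
      have hue2 : u ∈ p.edges[i-1] := by rw [h2, ← h1]; exact hue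
      rw [edge_getElem p (i-1) hi1, Sym2.mem_iff] at hue2
      rcases hue2 with h3 | h3
      · have := hidx (i-1) (by omega) h3.symm; omega
      · have := hidx (i-1+1) (by omega) h3.symm; omega

lemma ext2 (hM : G.IsPerfectMatchingOn M {v}ᶜ) {u' : V} (p : G.Walk v u')
    (hp : p.IsPath) (hodd : Odd p.length)
    (hC : ∀ j (h : j < p.edges.length), Odd j → p.edges[j] ∈ M) :
    ∃ (u'' : V) (hadj : G.Adj u' u''), u'' ∉ p.support ∧ s(u', u'') ∈ M := by
  have hls := p.length_support
  have hle := p.length_edges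
  have hnd := hp.support_nodup
  have hulen : p.support[p.length]'(by omega) = u' := supp_len p (by omega)
  have hidx : ∀ k (hk : k < p.support.length), p.support[k] = u' → k = p.length := by
    intro k hk hku
    exact (List.Nodup.getElem_inj_iff hnd).mp (by rw [hku, hulen])
  have hu'v : u' ≠ v := by
    intro hcon
    have h0 : p.support[0]'(by omega) = u' := by rw [supp_zero, hcon]
    have := hidx 0 (by omega) h0
    rcases hodd with ⟨k, hk⟩; omega
  obtain ⟨e, ⟨heM, hue⟩, _⟩ := hM.2.2 u' (by simpa using hu'v)
  set u'' := Sym2.Mem.other hue with hu''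
  have hspec : s(u', u'') = e := Sym2.other_spec hue
  have hadj : G.Adj u' u'' := by rw [← SimpleGraph.mem_edgeSet, hspec]; exact hM.1 heM
  have hu''e : u'' ∈ e := Sym2.other_mem hue
  refine ⟨u'', hadj, ?_, hspec ▸ heM⟩
  intro hmem
  obtain ⟨i, hi, hqi⟩ := List.mem_iff_getElem.mp hmem
  rcases Nat.eq_zero_or_pos i with rfl | hpos
  · -- u'' = v : but v is not in any edge of M
    have hqv : u'' = v := by rw [← hqi, supp_zero]
    have := hM.2.1 e heM u'' hu''e
    rw [hqv] at this; simp at this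
  · -- i ≥ 1
    have hqnv : p.support[i] ≠ v := by
      intro hcon
      have : (i : ℕ) = 0 := (List.Nodup.getElem_inj_iff hnd).mp
        (by rw [hcon, supp_zero p (by omega)])
      omega
    obtain ⟨f, _, hfu⟩ := hM.2.2 (p.support[i]) (by simpa using hqnv)
    have h1 : e = f := hfu e ⟨heM, hqi ▸ hu''e⟩
    rcases Nat.even_or_odd i with hie | hio
    · -- i even ⟹ i < len (parity), use edge i-1 (odd)
      have hilen : i < p.length := by
        rcases eq_or_lt_of_le (show i ≤ p.length by omega) with heq | h
        · rcases hodd with ⟨k, hk⟩; rcases hie with ⟨m, hm⟩; omega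
        · exact h
      have hi1 : i - 1 < p.edges.length := by omega
      have hkey : p.support[i-1+1]'(by omega) ∈ p.edges[i-1] := by
        rw [edge_getElem p (i-1) hi1]; simp
      have heqi : p.support[i]'(by omega) = p.support[i-1+1]'(by omega) := by congr 1; omega
      have h2 : p.edges[i-1] = f :=
        hfu _ ⟨hC (i-1) hi1 (by rcases hie with ⟨k,hk⟩; exact ⟨k-1, by omega⟩), heqi ▸ hkey⟩
      have hue2 : u' ∈ p.edges[i-1] := by rw [h2, ← h1]; exact hue
      rw [edge_getElem p (i-1) hi1, Sym2.mem_iff] at hue2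
      rcases hue2 with h3 | h3
      · have := hidx (i-1) (by omega) h3.symm; omega
      · have := hidx (i-1+1) (by omega) h3.symm; omega
    · -- i odd ⟹ i < len (else support[i] = u'', contra adj.ne'), use edge i
      have hilen : i < p.length := by
        rcases eq_or_lt_of_le (show i ≤ p.length by omega) with heq | h
        · exfalso
          have hsu : p.support[i] = u' := by subst heq; exact hulen
          exact hadj.ne' (hqi ▸ hsu)
        · exact h
      have h2 : p.edges[i]'(by omega) = f := by
        refine hfu _ ⟨hC i (by omega) hio, ?_⟩
        rw [edge_getElem p i (by omega)]; simp
      have hue2 : u' ∈ p.edges[i]'(by omega) := by rw [h2, ← h1]; exact hue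
      rw [edge_getElem p i (by omega), Sym2.mem_iff] at hue2
      rcases hue2 with h3 | h3
      · have := hidx i hi h3.symm; omega
      · have := hidx (i+1) (by omega) h3.symm
        rcases hodd with ⟨k, hk⟩; rcases hio with ⟨m, hm⟩; omega

lemma aux [Fintype V] (hM : G.IsPerfectMatchingOn M {v}ᶜ) (hM' : G.IsPerfectMatchingOn M' {w}ᶜ)
    (hvw : v ≠ w) :
    ∀ n (u : V) (p : G.Walk v u), p.IsPath → Even p.length →
      (∀ j (h : j < p.edges.length), Odd j → p.edges[j] ∈ M) →
      (∀ j (h : j < p.edges.length), Even j → p.edges[j] ∈ M') →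
      Fintype.card V ≤ p.length + n →
      ∃ q : G.Walk v w, q.IsPath ∧ Even q.length ∧
        (∀ j (h : j < q.edges.length), Odd j → q.edges[j] ∈ M) := by
  intro n
  induction n with
  | zero =>
    intro u p hp _ _ _ hcard
    exfalso
    have h1 : p.support.length ≤ Fintype.card V := hp.support_nodup.length_le_card
    have h2 := p.length_support
    omega
  | succ n ih =>
    intro u p hp hev hC hD hcard
    by_cases huw : u = w
    · subst huw; exact ⟨p, hp, hev, hC⟩
    obtain ⟨u', hadj1, hns1, hMe1, hu'w⟩ := ext1 hM' hvw p hp hev hD huw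
    set p1 := p.concat hadj1 with hp1def
    have hp1 : p1.IsPath := isPath_concat hp hadj1 hns1
    have hl1 : p1.length = p.length + 1 := Walk.length_concat p hadj1
    have hle1 : p1.edges.length = p.length + 1 := by rw [p1.length_edges, hl1]
    have hedges1 : p1.edges = p.edges ++ [s(u, u')] := by
      rw [hp1def, Walk.edges_concat, List.concat_eq_append]
    have hC1 : ∀ j (h : j < p1.edges.length), Odd j → p1.edges[j] ∈ M := by
      intro j hj hjodd
      have hj' : j < p.length + 1 := by rwa [hle1] at hj
      have hlep := p.length_edges
      rcases lt_or_eq_of_le (Nat.lt_succ_iff.mp hj') with h | h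
      · have : p1.edges[j] = p.edges[j]'(by omega) := by
          simp only [hedges1]; exact List.getElem_append_left (by omega)
        rw [this]; exact hC j (by omega) hjodd
      · exfalso; rcases hev with ⟨k, hk⟩; rcases hjodd with ⟨m, hm⟩; omega
    have hD1 : ∀ j (h : j < p1.edges.length), Even j → p1.edges[j] ∈ M' := by
      intro j hj hjev
      have hj' : j < p.length + 1 := by rwa [hle1] at hj
      have hlep := p.length_edges
      rcases lt_or_eq_of_le (Nat.lt_succ_iff.mp hj') with h | h
      · have : p1.edges[j] = p.edges[j]'(by omega) := by
          simp only [hedges1]; exact List.getElem_append_left (by omega)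
        rw [this]; exact hD j (by omega) hjev
      · have : p1.edges[j] = s(u, u') := by
          simp only [hedges1]
          have : j = p.edges.length := by omega
          subst this; simp
        rw [this]; exact hMe1
    obtain ⟨u'', hadj2, hns2, hMe2⟩ := ext2 hM p1 hp1
      (by rw [hl1]; rcases hev with ⟨k, hk⟩; exact ⟨k, by omega⟩) hC1
    set p2 := p1.concat hadj2 with hp2def
    have hp2 : p2.IsPath := isPath_concat hp1 hadj2 hns2
    have hl2 : p2.length = p.length + 2 := by rw [hp2def, Walk.length_concat, hl1]
    have hle2 : p2.edges.length = p.length + 2 := by rw [p2.length_edges, hl2]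
    have hedges2 : p2.edges = p1.edges ++ [s(u', u'')] := by
      rw [hp2def, Walk.edges_concat, List.concat_eq_append]
    have hC2 : ∀ j (h : j < p2.edges.length), Odd j → p2.edges[j] ∈ M := by
      intro j hj hjodd
      have hj' : j < p.length + 2 := by rwa [hle2] at hj
      rcases lt_or_eq_of_le (Nat.lt_succ_iff.mp hj') with h | h
      · have : p2.edges[j] = p1.edges[j]'(by omega) := by
          simp only [hedges2]; exact List.getElem_append_left (by omega)
        rw [this]; exact hC1 j (by omega) hjodd
      · have : p2.edges[j] = s(u', u'') := by
          simp only [hedges2]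
          have : j = p1.edges.length := by omega
          subst this; simp
        rw [this]; exact hMe2
    have hD2 : ∀ j (h : j < p2.edges.length), Even j → p2.edges[j] ∈ M' := by
      intro j hj hjev
      have hj' : j < p.length + 2 := by rwa [hle2] at hj
      rcases lt_or_eq_of_le (Nat.lt_succ_iff.mp hj') with h | h
      · have : p2.edges[j] = p1.edges[j]'(by omega) := by
          simp only [hedges2]; exact List.getElem_append_left (by omega)
        rw [this]; exact hD1 j (by omega) hjev
      · exfalso; rcases hev with ⟨k, hk⟩; rcases hjev with ⟨m, hm⟩; omega
    exact ih u'' p2 hp2 (by rw [hl2]; rcases hev with ⟨k, hk⟩; exact ⟨k+1, by omega⟩)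
      hC2 hD2 (by omega)

lemma covered (hM : G.IsPerfectMatchingOn M {v}ᶜ) (p : G.Walk v w)
    (hev : Even p.length)
    (hC : ∀ j (h : j < p.edges.length), Odd j → p.edges[j] ∈ M) :
    ∀ x ∈ p.support, x ≠ v → ∃ e ∈ p.edges, e ∈ M ∧ x ∈ e := by
  have hls := p.length_support
  have hle := p.length_edges
  intro x hx hxv
  obtain ⟨i, hi, hqi⟩ := List.mem_iff_getElem.mp hx
  have hpos : 0 < i := by
    rcases Nat.eq_zero_or_pos i with rfl | h
    · exact absurd (by rw [← hqi, supp_zero p (by omega)]) hxv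
    · exact h
  rcases Nat.even_or_odd i with hie | hio
  · -- i even ≥ 2 : edge i-1 (odd index)
    have hilen : i ≤ p.length := by omega
    have hi1 : i - 1 < p.edges.length := by omega
    refine ⟨p.edges[i-1], List.getElem_mem _,
      hC (i-1) hi1 (by rcases hie with ⟨k, hk⟩; exact ⟨k-1, by omega⟩), ?_⟩
    have hkey : p.support[i-1+1]'(by omega) ∈ p.edges[i-1] := by
      rw [edge_getElem p (i-1) hi1]; simp
    have heqi : p.support[i]'(by omega) = p.support[i-1+1]'(by omega) := by congr 1; omega
    rw [← hqi, heqi]; exact hkey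
  · -- i odd : i < len (parity), edge i
    have hilen : i < p.length := by
      rcases eq_or_lt_of_le (show i ≤ p.length by omega) with heq | h
      · rcases hev with ⟨k, hk⟩; rcases hio with ⟨m, hm⟩; omega
      · exact h
    refine ⟨p.edges[i]'(by omega), List.getElem_mem _, hC i (by omega) hio, ?_⟩
    rw [← hqi, edge_getElem p i (by omega)]; simp

lemma mem_support_of_mem_edge {a b x : V} (p : G.Walk a b) {e : Sym2 V}
    (he : e ∈ p.edges) (hx : x ∈ e) : x ∈ p.support := by
  obtain ⟨y, rfl⟩ := Sym2.mem_iff_exists.mp hx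
  exact p.fst_mem_support_of_mem_edges he

lemma final (hM : G.IsPerfectMatchingOn M {v}ᶜ) (p : G.Walk v w) (hp : p.IsPath)
    (hev : Even p.length)
    (hC : ∀ j (h : j < p.edges.length), Odd j → p.edges[j] ∈ M) :
    G.IsPerfectMatchingOn (M \ {e | e ∈ p.edges}) {x | x ∉ p.support} := by
  refine ⟨fun e he => hM.1 he.1, ?_, ?_⟩
  · rintro e ⟨heM, hep⟩ x hxe
    simp only [Set.mem_setOf_eq]
    intro hxs
    have hxv : x ≠ v := by
      intro h; subst h
      have := hM.2.1 e heM x hxe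
      simp at this
    obtain ⟨e₂, he₂p, he₂M, hxe₂⟩ := covered hM p hev hC x hxs hxv
    obtain ⟨f, _, hfu⟩ := hM.2.2 x (by simpa using hxv)
    have h1 : e = f := hfu e ⟨heM, hxe⟩
    have h2 : e₂ = f := hfu e₂ ⟨he₂M, hxe₂⟩
    exact hep (by rw [Set.mem_setOf_eq, h1, ← h2]; exact he₂p)
  · intro x hx
    simp only [Set.mem_setOf_eq] at hx
    have hxv : x ≠ v := fun h => hx (h ▸ p.start_mem_support)
    obtain ⟨e, ⟨heM, hxe⟩, hu⟩ := hM.2.2 x (by simpa using hxv)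
    have hep : e ∉ {e | e ∈ p.edges} := fun h =>
      hx (mem_support_of_mem_edge p h hxe)
    exact ⟨e, ⟨⟨heM, hep⟩, hxe⟩, fun f ⟨⟨hfM, _⟩, hxf⟩ => hu f ⟨hfM, hxf⟩⟩

end Aux

/-- Lemma 4.9: if `G` is hypomatchable, `M` is a perfect matching of `G − v`, and `w` is
any vertex, then `G` contains an alternating path `Q` of odd order from `v` to `w`
(i.e. its edges at odd positions belong to `M`) such that `M − E(Q)` is a perfect
matching of `G − V(Q)`. -/
theorem alternating_path_to {V : Type*} [Fintype V] (G : SimpleGraph V)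
    (hG : G.Hypomatchable) (v : V) (M : Set (Sym2 V))
    (hM : G.IsPerfectMatchingOn M {v}ᶜ) (w : V) :
    ∃ p : G.Walk v w, p.IsPath ∧ Odd p.support.length ∧
      (∀ (j : ℕ) (h : j < p.edges.length), Odd j → p.edges.get ⟨j, h⟩ ∈ M) ∧
      G.IsPerfectMatchingOn (M \ {e | e ∈ p.edges}) {x | x ∉ p.support} := by
  by_cases hvw : v = w
  · subst hvw
    refine ⟨Walk.nil, Walk.IsPath.nil, by simp, by simp, ?_⟩
    exact final hM Walk.nil Walk.IsPath.nil (by simp)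
      (fun j h _ => by simp at h)
  · obtain ⟨M', hM'⟩ := hG w
    obtain ⟨q, hq, hqev, hqC⟩ := aux hM hM' hvw (Fintype.card V) v Walk.nil
      Walk.IsPath.nil (by simp) (fun j h _ => by simp at h) (fun j h _ => by simp at h)
      (by simp)
    refine ⟨q, hq, ?_, ?_, final hM q hq hqev hqC⟩
    · rw [q.length_support]; rcases hqev with ⟨k, hk⟩; exact ⟨k, by omega⟩
    · intro j h hj
      rw [List.get_eq_getElem]
      exact hqC j h hj
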